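/- arXiv:1506.04885 — 2 statements merged into one kernel-verified Lean document; each statement's English description precedes it below -/
import Mathlib

section
/- For a compact IRU-set 𝒜 of nonnegative N×N matrices and α > 0: max_{A∈𝒜} ρ(A) < α if and only if there exists a strictly positive vector v with A·v < α·v componentwise (strict in every coordinate) for all A ∈ 𝒜. -/
open Matrix

/-- Spectral radius of a real square matrix: the maximum modulus of its complex eigenvalues. -/
noncomputable def specRad {N : ℕ} (A : Matrix (Fin N) (Fin N) ℝ) : ℝ :=
  sSup ((fun z : ℂ => ‖z‖) '' spectrum ℂ (A.map (Complex.ofReal)))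

/-- The IRU-set (independent row uncertainty set) determined by row sets `rows i ⊆ ℝ^M`:
all `N × M` matrices whose `i`-th row belongs to `rows i`. -/
def IRU {N M : ℕ} (rows : Fin N → Set (Fin M → ℝ)) : Set (Matrix (Fin N) (Fin M) ℝ) :=
  {A | ∀ i, A i ∈ rows i}

open scoped NNReal ENNReal

lemma exists_eigen {N : ℕ} (A : Matrix (Fin N) (Fin N) ℝ) {μ : ℂ}
    (hμ : μ ∈ spectrum ℂ (A.map (Complex.ofReal))) :
    ∃ w : Fin N → ℂ, w ≠ 0 ∧ (A.map (Complex.ofReal)) *ᵥ w = μ • w := by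
  set M := A.map (Complex.ofReal)
  have h1 : μ ∈ spectrum ℂ (Matrix.toLinAlgEquiv' M) := by
    rw [AlgEquiv.spectrum_eq]; exact hμ
  have h2 : Module.End.HasEigenvalue (Matrix.toLin' M) μ :=
    Module.End.hasEigenvalue_iff_mem_spectrum.2 h1
  obtain ⟨w, hw⟩ := h2.exists_hasEigenvector
  refine ⟨w, hw.2, ?_⟩
  have := hw.apply_eq_smul
  rwa [Matrix.toLin'_apply] at this

lemma specRad_le {N : ℕ} (A : Matrix (Fin N) (Fin N) ℝ) (hA : ∀ i j, 0 ≤ A i j)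
    (v : Fin N → ℝ) (hv : ∀ i, 0 < v i) (β : ℝ) (hβ : 0 ≤ β)
    (h : ∀ i, A.mulVec v i ≤ β * v i) : specRad A ≤ β := by
  apply Real.sSup_le _ hβ
  rintro x ⟨μ, hμ, rfl⟩
  obtain ⟨w, hw0, hw⟩ := exists_eigen A hμ
  -- pick i0 maximizing |w i| / v i
  have hex : ∃ i, w i ≠ 0 := by
    by_contra hc; push_neg at hc; exact hw0 (funext hc)
  have hNe : (Finset.univ : Finset (Fin N)).Nonempty := by
    obtain ⟨i, -⟩ := hex; exact ⟨i, Finset.mem_univ i⟩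
  obtain ⟨i0, -, hi0⟩ := Finset.exists_mem_eq_sup' hNe (fun i => ‖w i‖ / v i)
  have hmax : ∀ j, ‖w j‖ / v j ≤ ‖w i0‖ / v i0 := by
    intro j; rw [← hi0]
    exact Finset.le_sup' (fun i => ‖w i‖ / v i) (Finset.mem_univ j)
  have hm : ∀ j, ‖w j‖ ≤ (‖w i0‖ / v i0) * v j := by
    intro j
    have := hmax j
    rw [div_le_div_iff₀ (hv j) (hv i0)] at this
    rw [div_mul_eq_mul_div, le_div_iff₀ (hv i0)]
    linarith
  have hm0 : 0 < ‖w i0‖ := by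
    obtain ⟨i, hi⟩ := hex
    have h1 : 0 < ‖w i‖ := by
      simpa [norm_pos_iff] using hi
    have h2 : 0 < ‖w i‖ / v i := div_pos h1 (hv i)
    have h3 : 0 < ‖w i0‖ / v i0 := lt_of_lt_of_le h2 (hmax i)
    rcases div_pos_iff.mp h3 with ⟨h4, -⟩ | ⟨-, h5⟩
    · exact h4
    · linarith [hv i0]
  -- eigen equation at i0
  have heq : ((A.map (Complex.ofReal)) *ᵥ w) i0 = μ * w i0 := by rw [hw]; rfl
  have hkey : ‖μ‖ * ‖w i0‖ ≤ β * ‖w i0‖ := by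
    have hcalc : ‖μ * w i0‖ ≤ (‖w i0‖ / v i0) * (A.mulVec v i0) := by
      rw [← heq]
      have : ((A.map (Complex.ofReal)) *ᵥ w) i0 = ∑ j, (A i0 j : ℂ) * w j := by
        simp [Matrix.mulVec, dotProduct, Matrix.map_apply]
      rw [this]
      calc ‖∑ j, (A i0 j : ℂ) * w j‖
          ≤ ∑ j, ‖(A i0 j : ℂ) * w j‖ := by
            exact norm_sum_le _ _
        _ ≤ ∑ j, A i0 j * ((‖w i0‖ / v i0) * v j) := by
            apply Finset.sum_le_sum
            intro j _
            rw [norm_mul, Complex.norm_real, Real.norm_eq_abs, abs_of_nonneg (hA i0 j)]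
            exact mul_le_mul_of_nonneg_left (hm j) (hA i0 j)
        _ = (‖w i0‖ / v i0) * (A.mulVec v i0) := by
            rw [Matrix.mulVec, dotProduct, Finset.mul_sum]
            apply Finset.sum_congr rfl
            intro j _; ring
    rw [norm_mul] at hcalc
    calc ‖μ‖ * ‖w i0‖
        ≤ (‖w i0‖ / v i0) * (A.mulVec v i0) := hcalc
      _ ≤ (‖w i0‖ / v i0) * (β * v i0) := by
          exact mul_le_mul_of_nonneg_left (h i0)
            (div_nonneg (norm_nonneg _) (hv i0).le)
      _ = β * ‖w i0‖ := by
          field_simp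
          rw [mul_div_cancel_left₀ _ (hv i0).ne']
  exact le_of_mul_le_mul_right hkey hm0


lemma mulVec_mono {N : ℕ} (B : Matrix (Fin N) (Fin N) ℝ) (hB : ∀ i j, 0 ≤ B i j)
    {x y : Fin N → ℝ} (hxy : ∀ j, x j ≤ y j) : ∀ i, B.mulVec x i ≤ B.mulVec y i := by
  intro i
  simp only [Matrix.mulVec, dotProduct]
  apply Finset.sum_le_sum
  intro j _
  exact mul_le_mul_of_nonneg_left (hxy j) (hB i j)

lemma pow_nonneg_entries {N : ℕ} (A : Matrix (Fin N) (Fin N) ℝ) (hA : ∀ i j, 0 ≤ A i j) :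
    ∀ m, ∀ i j, 0 ≤ (A ^ m) i j := by
  intro m
  induction m with
  | zero => intro i j; by_cases h : i = j <;> simp [pow_zero, Matrix.one_apply, h]
  | succ m ih =>
    intro i j
    rw [pow_succ, Matrix.mul_apply]
    exact Finset.sum_nonneg fun k _ => mul_nonneg (ih i k) (hA k j)

lemma specRad_ge {N : ℕ} (A : Matrix (Fin N) (Fin N) ℝ) (hA : ∀ i j, 0 ≤ A i j)
    (u : Fin N → ℝ) (hu : ∀ i, 0 ≤ u i) (i0 : Fin N) (hu0 : 0 < u i0)
    (α : ℝ) (hα : 0 < α) (h : ∀ i, α * u i ≤ A.mulVec u i) : α ≤ specRad A := by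
  haveI : Nonempty (Fin N) := ⟨i0⟩
  -- power inequality
  have hupos : ∀ m i, 0 ≤ ((A ^ m).mulVec u) i := by
    intro m i
    simp only [Matrix.mulVec, dotProduct]
    exact Finset.sum_nonneg fun j _ => mul_nonneg (pow_nonneg_entries A hA m i j) (hu j)
  have hpow : ∀ m, ∀ i, α ^ m * u i ≤ ((A ^ m).mulVec u) i := by
    intro m
    induction m with
    | zero => intro i; simp [pow_zero, Matrix.one_mulVec]
    | succ m ih =>
      intro i
      have h1 : ((A ^ (m + 1)).mulVec u) i = ((A ^ m).mulVec (A.mulVec u)) i := by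
        rw [pow_succ, ← Matrix.mulVec_mulVec]
      rw [h1]
      have h2 : ((A ^ m).mulVec (α • u)) i ≤ ((A ^ m).mulVec (A.mulVec u)) i :=
        mulVec_mono _ (pow_nonneg_entries A hA m) (fun j => h j) i
      have h3 : ((A ^ m).mulVec (α • u)) i = α * ((A ^ m).mulVec u) i := by
        rw [Matrix.mulVec_smul]; simp
      calc α ^ (m + 1) * u i = α * (α ^ m * u i) := by ring
        _ ≤ α * ((A ^ m).mulVec u) i := by
            exact mul_le_mul_of_nonneg_left (ih i) hα.le
        _ = ((A ^ m).mulVec (α • u)) i := h3.symm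
        _ ≤ _ := h2
  -- complex matrix and norms
  set Mc := A.map (Complex.ofReal) with hMc
  letI : NormedRing (Matrix (Fin N) (Fin N) ℂ) := Matrix.linftyOpNormedRing
  letI : NormedAlgebra ℂ (Matrix (Fin N) (Fin N) ℂ) := Matrix.linftyOpNormedAlgebra
  haveI : CompleteSpace (Matrix (Fin N) (Fin N) ℂ) := FiniteDimensional.complete ℂ _
  haveI : Nontrivial (Matrix (Fin N) (Fin N) ℂ) := by
    refine ⟨0, 1, fun hc => ?_⟩
    have := congrFun (congrFun hc i0) i0
    simp [Matrix.one_apply] at this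
  have hmap : ∀ m : ℕ, Mc ^ m = (A ^ m).map (Complex.ofReal) := by
    intro m
    have h1 : (Complex.ofRealHom.mapMatrix (A ^ m) : Matrix (Fin N) (Fin N) ℂ)
        = (Complex.ofRealHom.mapMatrix A : Matrix (Fin N) (Fin N) ℂ) ^ m := map_pow _ _ _
    simp only [RingHom.mapMatrix_apply] at h1
    rw [hMc]
    exact h1.symm ▸ rfl
  set uc : Fin N → ℂ := fun j => (u j : ℂ) with huc
  have hucn : 0 < ‖uc‖ := by
    have h1 : ‖uc i0‖ ≤ ‖uc‖ := norm_le_pi_norm uc i0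
    have : ‖uc i0‖ = u i0 := by
      simp [huc, Complex.norm_real, abs_of_nonneg (hu i0)]
    linarith
  have hnorm : ∀ m : ℕ, α ^ m * u i0 ≤ ‖Mc ^ m‖ * ‖uc‖ := by
    intro m
    have hmv : (Mc ^ m).mulVec uc i0 = (((A ^ m).mulVec u i0 : ℝ) : ℂ) := by
      rw [hmap m]
      simp [Matrix.mulVec, dotProduct, Matrix.map_apply, huc]
    have h1 : ‖(Mc ^ m).mulVec uc i0‖ ≤ ‖(Mc ^ m).mulVec uc‖ := norm_le_pi_norm _ i0
    have h2 : ‖(Mc ^ m).mulVec uc‖ ≤ ‖Mc ^ m‖ * ‖uc‖ := Matrix.linfty_opNorm_mulVec _ _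
    have h3 : ‖(Mc ^ m).mulVec uc i0‖ = (A ^ m).mulVec u i0 := by
      rw [hmv, Complex.norm_real, Real.norm_of_nonneg (hupos m i0)]
    calc α ^ m * u i0 ≤ (A ^ m).mulVec u i0 := hpow m i0
      _ = ‖(Mc ^ m).mulVec uc i0‖ := h3.symm
      _ ≤ ‖Mc ^ m‖ * ‖uc‖ := le_trans h1 h2
  -- main contradiction
  by_contra hcon
  push_neg at hcon
  obtain ⟨k, hk, hkr⟩ := spectrum.exists_nnnorm_eq_spectralRadius_of_nonempty
    (𝕜 := ℂ) (a := Mc) (spectrum.nonempty Mc)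
  have hbdd : BddAbove ((fun z : ℂ => ‖z‖) '' spectrum ℂ Mc) :=
    ((spectrum.isCompact Mc).image continuous_norm).bddAbove
  have hkabs : ‖k‖ ≤ specRad A :=
    le_csSup hbdd ⟨k, hk, rfl⟩
  have hklt : ‖k‖ < α := lt_of_le_of_lt hkabs hcon
  set γ := (‖k‖ + α) / 2 with hγ
  have hγ1 : ‖k‖ < γ := by rw [hγ]; linarith
  have hγ2 : γ < α := by rw [hγ]; linarith
  have hγ0 : 0 < γ := lt_of_le_of_lt (norm_nonneg k) hγ1
  have hrlt : spectralRadius ℂ Mc < ((γ.toNNReal : ℝ≥0) : ℝ≥0∞) := by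
    rw [← hkr]
    rw [ENNReal.coe_lt_coe]
    rw [← NNReal.coe_lt_coe]
    rw [Real.coe_toNNReal _ hγ0.le]
    exact lt_of_le_of_lt (le_of_eq (coe_nnnorm k)) hγ1
  have ht := spectrum.pow_nnnorm_pow_one_div_tendsto_nhds_spectralRadius Mc
  have heven : ∀ᶠ m : ℕ in Filter.atTop,
      ((‖Mc ^ m‖₊ : ℝ≥0∞) ^ (1 / (m : ℝ))) < ((γ.toNNReal : ℝ≥0) : ℝ≥0∞) :=
    ht.eventually_lt_const hrlt
  obtain ⟨M0, hM0⟩ := Filter.eventually_atTop.1 heven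
  -- choose m1 with (γ/α)^m1 < u i0 / ‖uc‖
  have hc0 : 0 < u i0 / ‖uc‖ := div_pos hu0 hucn
  obtain ⟨m1, hm1⟩ := exists_pow_lt_of_lt_one hc0 (by rw [div_lt_one hα]; exact hγ2)
  set m := max (max M0 m1) 1 with hm
  have hmM0 : M0 ≤ m := le_trans (le_max_left _ _) (le_max_left _ _)
  have hmm1 : m1 ≤ m := le_trans (le_max_right _ _) (le_max_left _ _)
  have hm1' : 1 ≤ m := le_max_right _ _
  -- norm upper bound at m
  have hnm : ‖Mc ^ m‖ ≤ γ ^ m := by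
    have h1 := hM0 m hmM0
    have hm0 : (m : ℝ) ≠ 0 := Nat.cast_ne_zero.2 (by omega)
    set a : ℝ≥0∞ := (‖Mc ^ m‖₊ : ℝ≥0∞) with ha
    have h3 : (a ^ (1 / (m : ℝ))) ^ (m : ℝ) = a := by
      rw [← ENNReal.rpow_mul, one_div_mul_cancel hm0, ENNReal.rpow_one]
    have h4 : a ≤ ((γ.toNNReal : ℝ≥0) : ℝ≥0∞) ^ (m : ℝ) := by
      rw [← h3]
      exact ENNReal.rpow_le_rpow h1.le (Nat.cast_nonneg m)
    rw [ENNReal.rpow_natCast, ← ENNReal.coe_pow, ENNReal.coe_le_coe] at h4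
    have h5 : (‖Mc ^ m‖₊ : ℝ) ≤ ((γ.toNNReal ^ m : ℝ≥0) : ℝ) := NNReal.coe_le_coe.2 h4
    rw [coe_nnnorm] at h5
    rw [NNReal.coe_pow, Real.coe_toNNReal _ hγ0.le] at h5
    exact h5
  -- contradiction
  have hfinal : u i0 / ‖uc‖ ≤ (γ / α) ^ m := by
    have h1 : α ^ m * u i0 ≤ γ ^ m * ‖uc‖ := by
      calc α ^ m * u i0 ≤ ‖Mc ^ m‖ * ‖uc‖ := hnorm m
        _ ≤ γ ^ m * ‖uc‖ := mul_le_mul_of_nonneg_right hnm (norm_nonneg _)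
    rw [div_pow, div_le_div_iff₀ hucn (pow_pos hα m)]
    linarith
  have hmono : (γ / α) ^ m ≤ (γ / α) ^ m1 :=
    pow_le_pow_of_le_one (div_nonneg hγ0.le hα.le) (by rw [div_le_one hα]; exact hγ2.le) hmm1
  linarith


variable {N : ℕ}

lemma continuous_dotProduct (v : Fin N → ℝ) : Continuous fun a : Fin N → ℝ => a ⬝ᵥ v := by
  simp only [dotProduct]
  exact continuous_finset_sum _ fun j _ => (continuous_apply j).mul continuous_const

noncomputable def Tmax (rows : Fin N → Set (Fin N → ℝ)) (v : Fin N → ℝ) : Fin N → ℝ :=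
  fun i => sSup ((fun a => a ⬝ᵥ v) '' rows i)

section TmaxFacts

variable {rows : Fin N → Set (Fin N → ℝ)}


lemma Tmax_bddAbove (hcomp : ∀ i, IsCompact (rows i)) (v : Fin N → ℝ) (i : Fin N) :
    BddAbove ((fun a => a ⬝ᵥ v) '' rows i) :=
  ((hcomp i).image (continuous_dotProduct v)).bddAbove

lemma le_Tmax (hcomp : ∀ i, IsCompact (rows i)) (v : Fin N → ℝ) {a : Fin N → ℝ} {i : Fin N} (ha : a ∈ rows i) :
    a ⬝ᵥ v ≤ Tmax rows v i :=
  le_csSup (Tmax_bddAbove hcomp v i) ⟨a, ha, rfl⟩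

lemma mulVec_le_Tmax (hcomp : ∀ i, IsCompact (rows i)) {A : Matrix (Fin N) (Fin N) ℝ} (hA : A ∈ IRU rows)
    (v : Fin N → ℝ) (i : Fin N) : A.mulVec v i ≤ Tmax rows v i :=
  le_Tmax hcomp v (hA i)

lemma exists_greedy (hne : ∀ i, (rows i).Nonempty) (hcomp : ∀ i, IsCompact (rows i)) (v : Fin N → ℝ) :
    ∃ A ∈ IRU rows, ∀ i, A.mulVec v i = Tmax rows v i := by
  have h : ∀ i, ∃ a ∈ rows i, a ⬝ᵥ v = Tmax rows v i := by
    intro i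
    obtain ⟨a, ha, hmax⟩ := (hcomp i).exists_isMaxOn (hne i)
      (continuous_dotProduct v).continuousOn
    refine ⟨a, ha, le_antisymm (le_Tmax hcomp v ha) ?_⟩
    apply csSup_le ((hne i).image _)
    rintro x ⟨b, hb, rfl⟩
    exact hmax hb
  choose A hA hAv using h
  exact ⟨A, hA, hAv⟩

lemma Tmax_mono (hne : ∀ i, (rows i).Nonempty) (hcomp : ∀ i, IsCompact (rows i)) (hnn : ∀ i, ∀ a ∈ rows i, ∀ j, 0 ≤ a j) {v w : Fin N → ℝ} (hvw : ∀ j, v j ≤ w j) (i : Fin N) :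
    Tmax rows v i ≤ Tmax rows w i := by
  apply csSup_le ((hne i).image _)
  rintro x ⟨a, ha, rfl⟩
  calc a ⬝ᵥ v ≤ a ⬝ᵥ w := by
        apply Finset.sum_le_sum
        intro j _
        exact mul_le_mul_of_nonneg_left (hvw j) (hnn i a ha j)
    _ ≤ Tmax rows w i := le_Tmax hcomp w ha

lemma Tmax_nonneg (hne : ∀ i, (rows i).Nonempty) (hcomp : ∀ i, IsCompact (rows i)) (hnn : ∀ i, ∀ a ∈ rows i, ∀ j, 0 ≤ a j) {v : Fin N → ℝ} (hv : ∀ j, 0 ≤ v j) (i : Fin N) :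
    0 ≤ Tmax rows v i := by
  obtain ⟨a, ha⟩ := hne i
  have h1 : 0 ≤ a ⬝ᵥ v :=
    Finset.sum_nonneg fun j _ => mul_nonneg (hnn i a ha j) (hv j)
  exact le_trans h1 (le_Tmax hcomp v ha)

lemma Tmax_combo_le (hne : ∀ i, (rows i).Nonempty) (hcomp : ∀ i, IsCompact (rows i)) (K : ℕ) (c : ℕ → ℝ) (hc : ∀ k, 0 ≤ c k) (f : ℕ → Fin N → ℝ)
    (i : Fin N) :
    Tmax rows (∑ k ∈ Finset.range K, c k • f k) i
      ≤ ∑ k ∈ Finset.range K, c k * Tmax rows (f k) i := by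
  apply csSup_le ((hne i).image _)
  rintro x ⟨a, ha, rfl⟩
  have h1 : a ⬝ᵥ (∑ k ∈ Finset.range K, c k • f k)
      = ∑ k ∈ Finset.range K, c k * (a ⬝ᵥ f k) := by
    simp only [dotProduct, Finset.sum_apply, Pi.smul_apply, smul_eq_mul,
      Finset.mul_sum]
    rw [Finset.sum_comm]
    apply Finset.sum_congr rfl
    intro k _
    apply Finset.sum_congr rfl
    intro j _
    ring
  show a ⬝ᵥ (∑ k ∈ Finset.range K, c k • f k) ≤ _
  rw [h1]
  apply Finset.sum_le_sum
  intro k _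
  exact mul_le_mul_of_nonneg_left (le_Tmax hcomp (f k) ha) (hc k)

end TmaxFacts


lemma mulVec_nonneg (B : Matrix (Fin N) (Fin N) ℝ) (hB : ∀ i j, 0 ≤ B i j)
    {x : Fin N → ℝ} (hx : ∀ j, 0 ≤ x j) : ∀ i, 0 ≤ B.mulVec x i := by
  intro i
  simp only [Matrix.mulVec, dotProduct]
  exact Finset.sum_nonneg fun j _ => mul_nonneg (hB i j) (hx j)

lemma mulVec_sum_comm (M : Matrix (Fin N) (Fin N) ℝ) (g : Fin N → Fin N → ℝ) :
    M.mulVec (∑ j, g j) = ∑ j, M.mulVec (g j) := by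
  funext i
  simp only [Matrix.mulVec, dotProduct, Finset.sum_apply, Finset.mul_sum]
  exact Finset.sum_comm


lemma key' {rows : Fin N → Set (Fin N → ℝ)}
    (hne : ∀ i, (rows i).Nonempty) (hcomp : ∀ i, IsCompact (rows i))
    (hnn : ∀ i, ∀ a ∈ rows i, ∀ j, 0 ≤ a j)
    [hnem : Nonempty (Fin N)]
    (α : ℝ) (hα : 0 < α)
    (hW : ∀ k : ℕ, ∃ i, α ^ k ≤ (Tmax rows)^[k] 1 i)
    (β ε' : ℝ) (hβ0 : 0 < β) (hβα : β < α) (hε' : 0 < ε') :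
    ∃ B ∈ IRU rows, ∃ u : Fin N → ℝ, (∀ i, 0 ≤ u i ∧ u i ≤ 1) ∧ (∃ i, u i = 1) ∧
      ∀ i, β * u i - ε' ≤ B.mulVec u i := by
  classical
  have hN0 : 0 < N := Fin.pos_iff_nonempty.2 hnem
  have hNR : 0 < (N : ℝ) := by exact_mod_cast hN0
  set ε := min 1 (ε' / N) with hεdef
  have hε : 0 < ε := lt_min one_pos (div_pos hε' hNR)
  have hεN : ε * N ≤ ε' := by
    have h1 : ε ≤ ε' / N := min_le_right _ _
    calc ε * N ≤ (ε' / N) * N := mul_le_mul_of_nonneg_right h1 hNR.le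
      _ = ε' := by field_simp
  have hαβ : 1 < α / β := by rw [lt_div_iff₀ hβ0]; linarith
  obtain ⟨k, hk⟩ := pow_unbounded_of_one_lt (N * β / ε) hαβ
  have hβk : 0 < β ^ k := pow_pos hβ0 k
  have hk2 : β ^ (k + 1) ≤ ε * α ^ k / N := by
    rw [div_pow, div_lt_div_iff₀ hε (pow_pos hβ0 k)] at hk
    rw [le_div_iff₀ hNR, pow_succ]
    nlinarith [pow_pos hα k]
  -- perturbed iterates
  set S : (Fin N → ℝ) → (Fin N → ℝ) := fun v i => Tmax rows v i + ε * ∑ j, v j with hSdef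
  set x : ℕ → (Fin N → ℝ) := fun t => S^[t] 1 with hxdef
  have hx0 : x 0 = 1 := rfl
  have hxs : ∀ t, x (t + 1) = S (x t) := fun t => Function.iterate_succ_apply' S t 1
  have hxnn : ∀ t j, 0 ≤ x t j := by
    intro t
    induction t with
    | zero => intro j; rw [hx0]; norm_num
    | succ t ih =>
      intro j
      rw [hxs t]
      have h1 := Tmax_nonneg hne hcomp hnn ih j
      have h2 : 0 ≤ ∑ j, x t j := Finset.sum_nonneg fun j _ => ih j
      have := mul_nonneg hε.le h2
      show 0 ≤ Tmax rows (x t) j + ε * ∑ j, x t j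
      linarith
  have hxw : ∀ t j, (Tmax rows)^[t] 1 j ≤ x t j := by
    intro t
    induction t with
    | zero => intro j; exact le_refl _
    | succ t ih =>
      intro j
      rw [Function.iterate_succ_apply' (Tmax rows) t 1, hxs t]
      have h1 : Tmax rows ((Tmax rows)^[t] 1) j ≤ Tmax rows (x t) j :=
        Tmax_mono hne hcomp hnn ih j
      have h2 : 0 ≤ ε * ∑ j, x t j :=
        mul_nonneg hε.le (Finset.sum_nonneg fun j _ => hxnn t j)
      show Tmax rows ((Tmax rows)^[t] 1) j ≤ Tmax rows (x t) j + ε * ∑ j, x t j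
      linarith
  -- greedy matrices
  choose A hAIRU hAg using fun t : ℕ => exists_greedy hne hcomp (x t)
  set A0 : Matrix (Fin N) (Fin N) ℝ := fun i => (hne i).choose with hA0def
  have hA0IRU : A0 ∈ IRU rows := fun i => (hne i).choose_spec
  -- combined sequence with connector at step 0
  set As : ℕ → Matrix (Fin N) (Fin N) ℝ := fun t => if t = 0 then A0 else A (t - 1) with hAsdef
  have hAsIRU : ∀ t, As t ∈ IRU rows := by
    intro t
    simp only [hAsdef]
    split
    · exact hA0IRU
    · exact hAIRU _
  have hAsnn : ∀ t i j, 0 ≤ As t i j := fun t i j => hnn i _ (hAsIRU t i) j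
  set Ms : ℕ → Matrix (Fin N) (Fin N) ℝ :=
    fun t => As t + Matrix.of (fun _ _ => ε) with hMsdef
  have hMsapp : ∀ t i j, Ms t i j = As t i j + ε := fun t i j => rfl
  have hMsnn : ∀ t i j, 0 ≤ Ms t i j := by
    intro t i j
    rw [hMsapp]
    linarith [hAsnn t i j]
  have hMsmul : ∀ t v i, (Ms t).mulVec v i = (As t).mulVec v i + ε * ∑ j, v j := by
    intro t v i
    rw [hMsdef]
    rw [Matrix.add_mulVec]
    simp only [Pi.add_apply]
    congr 1
    simp [Matrix.mulVec, dotProduct, Finset.mul_sum]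
  -- chains q j (from basis vectors, no connector) and their sum x
  set q : Fin N → ℕ → (Fin N → ℝ) :=
    fun j t => Nat.rec (Pi.single j 1) (fun t qt => (Ms (t + 1)).mulVec qt) t with hqdef
  have hq0 : ∀ j, q j 0 = Pi.single j 1 := fun j => rfl
  have hqs : ∀ j t, q j (t + 1) = (Ms (t + 1)).mulVec (q j t) := fun j t => rfl
  have hqnn : ∀ j t i, 0 ≤ q j t i := by
    intro j t
    induction t with
    | zero =>
      intro i
      rw [hq0]
      by_cases h : i = j
      · subst h; simp
      · simp [Pi.single_eq_of_ne h]
    | succ t ih =>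
      intro i
      rw [hqs]
      exact mulVec_nonneg _ (hMsnn (t + 1)) ih i
  have hqsum : ∀ t, ∑ j, q j t = x t := by
    intro t
    induction t with
    | zero =>
      rw [hx0]
      funext i
      simp only [Finset.sum_apply]
      rw [Finset.sum_eq_single i]
      · rw [hq0]; simp
      · intro b _ hb; exact Pi.single_eq_of_ne (Ne.symm hb) 1
      · intro h; exact absurd (Finset.mem_univ i) h
    | succ t ih =>
      have h1 : ∑ j, q j (t + 1) = (Ms (t + 1)).mulVec (∑ j, q j t) := by
        rw [mulVec_sum_comm]
      rw [h1, ih, hxs t]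
      funext i
      rw [hMsmul]
      have h2 : (As (t + 1)).mulVec (x t) i = (A t).mulVec (x t) i := by
        simp [hAsdef]
      rw [h2, hAg t i]
  -- find i1 and j0
  obtain ⟨i1, hi1⟩ := hW k
  have hxk : α ^ k ≤ ∑ j, q j k i1 := by
    have := hxw k i1
    have h2 : (∑ j, q j k) i1 = ∑ j, q j k i1 := Finset.sum_apply _ _ _
    rw [hqsum k] at h2
    rw [← h2] at *
    linarith [hi1]
  obtain ⟨j0, hj0⟩ : ∃ j0, α ^ k / N ≤ q j0 k i1 := by
    by_contra hcon
    push_neg at hcon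
    have h1 : ∑ j, q j k i1 < ∑ _j : Fin N, α ^ k / N :=
      Finset.sum_lt_sum_of_nonempty Finset.univ_nonempty fun j _ => hcon j
    rw [Finset.sum_const, Finset.card_univ, Fintype.card_fin, nsmul_eq_mul] at h1
    rw [mul_div_cancel₀ _ hNR.ne'] at h1
    linarith
  -- the y chain with connector
  set y : ℕ → (Fin N → ℝ) :=
    fun t => Nat.rec (Pi.single i1 1) (fun t yt => (Ms t).mulVec yt) t with hydef
  have hy0 : y 0 = Pi.single i1 1 := rfl
  have hys : ∀ t, y (t + 1) = (Ms t).mulVec (y t) := fun t => rfl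
  have hynn : ∀ t i, 0 ≤ y t i := by
    intro t
    induction t with
    | zero =>
      intro i
      rw [hy0]
      by_cases h : i = i1
      · subst h; simp
      · simp [Pi.single_eq_of_ne h]
    | succ t ih =>
      intro i
      rw [hys]
      exact mulVec_nonneg _ (hMsnn t) ih i
  -- y (t+1) ≥ ε • q j0 t
  have hyq : ∀ t i, ε * q j0 t i ≤ y (t + 1) i := by
    intro t
    induction t with
    | zero =>
      intro i
      rw [hys 0, hy0, hq0]
      have h1 : (Ms 0).mulVec (Pi.single i1 1) i = Ms 0 i i1 := by
        simp [Matrix.mulVec_single]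
      rw [h1]
      by_cases h : i = j0
      · subst h
        simp only [Pi.single_eq_same]
        rw [hMsapp]
        have := hAsnn 0 i i1
        linarith
      · rw [Pi.single_eq_of_ne h]
        rw [hMsapp]
        have := hAsnn 0 i i1
        linarith
    | succ t ih =>
      intro i
      rw [hys (t + 1), hqs]
      have h1 : ∀ j, ε * q j0 t j ≤ y (t + 1) j := ih
      have h2 : (Ms (t + 1)).mulVec (fun j => ε * q j0 t j) i
          ≤ (Ms (t + 1)).mulVec (y (t + 1)) i :=
        mulVec_mono _ (hMsnn (t + 1)) h1 i
      have h3 : (Ms (t + 1)).mulVec (fun j => ε * q j0 t j) i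
          = ε * (Ms (t + 1)).mulVec (q j0 t) i := by
        simp only [Matrix.mulVec, dotProduct, Finset.mul_sum]
        apply Finset.sum_congr rfl
        intro j _
        ring
      rw [← h3]
      exact h2
  set m := k + 1 with hmdef
  have hym : β ^ m ≤ y m i1 := by
    have h1 : ε * q j0 k i1 ≤ y m i1 := hyq k i1
    have h2 : ε * (α ^ k / N) ≤ ε * q j0 k i1 := mul_le_mul_of_nonneg_left hj0 hε.le
    calc β ^ m ≤ ε * α ^ k / N := hk2
      _ = ε * (α ^ k / N) := by ring
      _ ≤ y m i1 := le_trans h2 h1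
  -- the z vector
  have hIccne : (Finset.Icc 1 m).Nonempty := ⟨1, by simp [hmdef]⟩
  set z : Fin N → ℝ := fun i => (Finset.Icc 1 m).sup' hIccne (fun t => y t i / β ^ t) with hzdef
  have hzge : ∀ t ∈ Finset.Icc 1 m, ∀ i, y t i / β ^ t ≤ z i := by
    intro t ht i
    exact Finset.le_sup' (fun t => y t i / β ^ t) ht
  have hznn : ∀ i, 0 ≤ z i := by
    intro i
    have h1 : y m i / β ^ m ≤ z i := hzge m (by simp [hmdef]) i
    have h2 : 0 ≤ y m i / β ^ m := div_nonneg (hynn m i) (pow_pos hβ0 m).le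
    linarith
  have hzi1 : 1 ≤ z i1 := by
    have h1 : y m i1 / β ^ m ≤ z i1 := hzge m (by simp [hmdef]) i1
    have h2 : 1 ≤ y m i1 / β ^ m := by
      rw [le_div_iff₀ (pow_pos hβ0 m)]
      linarith [hym]
    linarith
  have hz0 : ∀ i, y 0 i ≤ z i := by
    intro i
    rw [hy0]
    by_cases h : i = i1
    · subst h; simpa using hzi1
    · rw [Pi.single_eq_of_ne h]; exact hznn i
  have hzs : ∀ t, t < m → ∀ i, y t i / β ^ t ≤ z i := by
    intro t ht i
    rcases Nat.eq_zero_or_pos t with h | h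
    · subst h; simpa using hz0 i
    · exact hzge t (Finset.mem_Icc.2 ⟨h, ht.le⟩) i
  -- argmax selection
  have hsel : ∀ i, ∃ t ∈ Finset.Icc 1 m, z i = y t i / β ^ t := fun i =>
    Finset.exists_mem_eq_sup' hIccne _
  choose tt htt hztt using hsel
  set B : Matrix (Fin N) (Fin N) ℝ := fun i => As (tt i - 1) i with hBdef
  have hBIRU : B ∈ IRU rows := fun i => hAsIRU (tt i - 1) i
  have hkey : ∀ i, β * z i ≤ B.mulVec z i + ε * ∑ j, z j := by
    intro i
    obtain ⟨ht1, htm⟩ := Finset.mem_Icc.1 (htt i)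
    set s := tt i - 1 with hsdef
    have hs1 : s + 1 = tt i := by omega
    have hsm : s < m := by omega
    -- row of B at i is row of As s at i
    have hrow : ∀ w : Fin N → ℝ, B.mulVec w i = (As s).mulVec w i := by
      intro w; rfl
    have h1 : ∀ j, y s j / β ^ s ≤ z j := hzs s hsm
    have h2 : (As s).mulVec (fun j => y s j / β ^ s) i ≤ (As s).mulVec z i :=
      mulVec_mono _ (hAsnn s) h1 i
    have h3 : ε * ∑ j, y s j / β ^ s ≤ ε * ∑ j, z j :=
      mul_le_mul_of_nonneg_left (Finset.sum_le_sum fun j _ => h1 j) hε.le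
    have h4 : (As s).mulVec (fun j => y s j / β ^ s) i + ε * ∑ j, y s j / β ^ s
        = (y (s + 1) i) / β ^ s := by
      have h5 : (Ms s).mulVec (y s) i = (As s).mulVec (y s) i + ε * ∑ j, y s j :=
        hMsmul s (y s) i
      have h6 : (As s).mulVec (fun j => y s j / β ^ s) i
          = ((As s).mulVec (y s) i) / β ^ s := by
        simp only [Matrix.mulVec, dotProduct, Finset.sum_div]
        apply Finset.sum_congr rfl
        intro j _
        ring
      have h7 : ε * ∑ j, y s j / β ^ s = (ε * ∑ j, y s j) / β ^ s := by
        rw [Finset.mul_sum, Finset.mul_sum, Finset.sum_div]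
        apply Finset.sum_congr rfl
        intro j _
        ring
      rw [h6, h7, ← add_div, ← h5, ← hys s]
    have h8 : y (s + 1) i / β ^ s = β * z i := by
      rw [hztt i, ← hs1]
      rw [pow_succ]
      field_simp
    calc β * z i = y (s + 1) i / β ^ s := h8.symm
      _ = (As s).mulVec (fun j => y s j / β ^ s) i + ε * ∑ j, y s j / β ^ s := h4.symm
      _ ≤ (As s).mulVec z i + ε * ∑ j, z j := add_le_add h2 h3
      _ = B.mulVec z i + ε * ∑ j, z j := by rw [hrow]
  -- normalize
  obtain ⟨imax, -, himax⟩ := Finset.exists_mem_eq_sup' Finset.univ_nonempty z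
  have hzmax : ∀ i, z i ≤ z imax := by
    intro i
    rw [← himax]
    exact Finset.le_sup' z (Finset.mem_univ i)
  have hzmaxpos : 0 < z imax := lt_of_lt_of_le one_pos (le_trans hzi1 (hzmax i1))
  set u : Fin N → ℝ := fun i => z i / z imax with hudef
  refine ⟨B, hBIRU, u, ?_, ?_, ?_⟩
  · intro i
    constructor
    · exact div_nonneg (hznn i) hzmaxpos.le
    · rw [div_le_one hzmaxpos]; exact hzmax i
  · exact ⟨imax, div_self (ne_of_gt hzmaxpos)⟩
  · intro i
    have h1 : B.mulVec u i = (B.mulVec z i) / z imax := by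
      simp only [hudef, Matrix.mulVec, dotProduct, Finset.sum_div]
      apply Finset.sum_congr rfl
      intro j _
      ring
    have h2 : ε * ∑ j, u j ≤ ε' := by
      have h3 : ∑ j, u j ≤ ∑ _j : Fin N, (1 : ℝ) := by
        apply Finset.sum_le_sum
        intro j _
        rw [hudef, div_le_one hzmaxpos]
        exact hzmax j
      rw [Finset.sum_const, Finset.card_univ, Fintype.card_fin, nsmul_eq_mul, mul_one] at h3
      calc ε * ∑ j, u j ≤ ε * N := mul_le_mul_of_nonneg_left h3 hε.le
        _ ≤ ε' := hεN
    have h4 : β * z i ≤ B.mulVec z i + ε * ∑ j, z j := hkey i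
    have hsum : ∑ j, u j = (∑ j, z j) / z imax := by
      rw [hudef]
      exact (Finset.sum_div _ _ _).symm
    have h9 : (β * z i) / z imax ≤ (B.mulVec z i + ε * ∑ j, z j) / z imax :=
      (div_le_div_iff_of_pos_right hzmaxpos).2 h4
    have e1 : (β * z i) / z imax = β * u i := by
      rw [hudef, mul_div_assoc]
    have e2 : (B.mulVec z i + ε * ∑ j, z j) / z imax
        = B.mulVec u i + ε * ∑ j, u j := by
      rw [add_div, ← h1, hsum, mul_div_assoc]
    rw [e1, e2] at h9
    linarith [h9, h2]


lemma IRU_compact {rows : Fin N → Set (Fin N → ℝ)} (hcomp : ∀ i, IsCompact (rows i)) :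
    IsCompact (IRU rows) := by
  have h1 : IRU rows = Set.pi Set.univ rows := by
    ext A
    constructor
    · exact fun h i _ => h i
    · exact fun h i => h i trivial
  rw [h1]
  exact isCompact_univ_pi hcomp

theorem stmt15 {N : ℕ} (rows : Fin N → Set (Fin N → ℝ))
    (hne : ∀ i, (rows i).Nonempty) (hcomp : ∀ i, IsCompact (rows i))
    (hnn : ∀ i, ∀ a ∈ rows i, ∀ j, 0 ≤ a j) (α : ℝ) (hα : 0 < α) :
    (∀ A ∈ IRU rows, specRad A < α) ↔
      ∃ v : Fin N → ℝ, (∀ i, 0 < v i) ∧ ∀ A ∈ IRU rows, ∀ i, A.mulVec v i < α * v i := by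
  constructor
  · -- forward direction
    intro H
    rcases Nat.eq_zero_or_pos N with hN | hN
    · subst hN
      exact ⟨fun _ => 1, fun i => i.elim0, fun A _ i => i.elim0⟩
    haveI hnem : Nonempty (Fin N) := Fin.pos_iff_nonempty.1 hN
    classical
    set w : ℕ → (Fin N → ℝ) := fun t => (Tmax rows)^[t] 1 with hwdef
    have hw0 : w 0 = 1 := rfl
    have hws : ∀ t, w (t + 1) = Tmax rows (w t) := fun t =>
      Function.iterate_succ_apply' (Tmax rows) t 1
    have hwnn : ∀ t j, 0 ≤ w t j := by
      intro t
      induction t with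
      | zero => intro j; rw [hw0]; norm_num
      | succ t ih => intro j; rw [hws t]; exact Tmax_nonneg hne hcomp hnn ih j
    -- main claim
    have hKey : ∃ K, ∀ i, w K i < α ^ K := by
      by_contra hcon
      push_neg at hcon
      -- sequences from key'
      have hseq : ∀ n : ℕ, ∃ B ∈ IRU rows, ∃ u : Fin N → ℝ,
          (∀ i, 0 ≤ u i ∧ u i ≤ 1) ∧ (∃ i, u i = 1) ∧
          ∀ i, (α - α / 2 * (1 / (n + 1))) * u i - 1 / (n + 1) ≤ B.mulVec u i := by
        intro n
        have hn1 : (0:ℝ) < 1 / (n + 1) := by positivity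
        have hn2 : (1:ℝ) / (n + 1) ≤ 1 := by
          rw [div_le_one (by positivity)]
          push_cast
          linarith [Nat.cast_nonneg (α := ℝ) n]
        apply key' hne hcomp hnn α hα hcon
        · nlinarith
        · nlinarith
        · exact hn1
      choose B hB u hu hu1 hineq using hseq
      -- limit via compactness
      set K2 : Set (Fin N → ℝ) := Set.pi Set.univ fun _ => Set.Icc (0:ℝ) 1 with hK2
      have hK2comp : IsCompact K2 := isCompact_univ_pi fun _ => isCompact_Icc
      have hQcomp : IsCompact ((IRU rows) ×ˢ K2) := (IRU_compact hcomp).prod hK2comp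
      have hmemQ : ∀ n, (B n, u n) ∈ (IRU rows) ×ˢ K2 := by
        intro n
        refine ⟨hB n, ?_⟩
        intro i _
        exact ⟨(hu n i).1, (hu n i).2⟩
      haveI : FirstCountableTopology (Matrix (Fin N) (Fin N) ℝ) :=
        inferInstanceAs (FirstCountableTopology (Fin N → Fin N → ℝ))
      obtain ⟨⟨Bl, ul⟩, hmem, φ, hφ, hlim⟩ := hQcomp.tendsto_subseq hmemQ
      have hlimB : Filter.Tendsto (fun n => B (φ n)) Filter.atTop (nhds Bl) :=
        (continuous_fst.tendsto _).comp hlim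
      have hlimu : Filter.Tendsto (fun n => u (φ n)) Filter.atTop (nhds ul) :=
        (continuous_snd.tendsto _).comp hlim
      have hlimui : ∀ i, Filter.Tendsto (fun n => u (φ n) i) Filter.atTop (nhds (ul i)) :=
        fun i => ((continuous_apply i).tendsto _).comp hlimu
      have hlimBij : ∀ i j, Filter.Tendsto (fun n => B (φ n) i j) Filter.atTop
          (nhds (Bl i j)) := by
        intro i j
        exact ((continuous_apply j).tendsto _).comp (((continuous_apply i).tendsto _).comp hlimB)
      have hlimmv : ∀ i, Filter.Tendsto (fun n => (B (φ n)).mulVec (u (φ n)) i)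
          Filter.atTop (nhds (Bl.mulVec ul i)) := by
        intro i
        simp only [Matrix.mulVec, dotProduct]
        exact tendsto_finset_sum _ fun j _ => (hlimBij i j).mul (hlimui j)
      have hn0 : Filter.Tendsto (fun n : ℕ => (1:ℝ) / (n + 1)) Filter.atTop (nhds 0) :=
        tendsto_one_div_add_atTop_nhds_zero_nat
      have hφtop : Filter.Tendsto φ Filter.atTop Filter.atTop := hφ.tendsto_atTop
      have hn0' : Filter.Tendsto (fun n : ℕ => (1:ℝ) / (φ n + 1)) Filter.atTop (nhds 0) :=
        hn0.comp hφtop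
      -- limit inequality
      have hfin : ∀ i, α * ul i ≤ Bl.mulVec ul i := by
        intro i
        have hL : Filter.Tendsto
            (fun n => (α - α / 2 * (1 / (φ n + 1))) * u (φ n) i - 1 / (φ n + 1))
            Filter.atTop (nhds (α * ul i)) := by
          have h1 : Filter.Tendsto (fun n => α - α / 2 * (1 / ((φ n : ℝ) + 1)))
              Filter.atTop (nhds α) := by
            have := (hn0'.const_mul (α / 2)).const_sub α
            simpa using this
          have h2 := (h1.mul (hlimui i)).sub hn0'
          simpa using h2
        exact le_of_tendsto_of_tendsto' hL (hlimmv i) fun n => hineq (φ n) i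
      -- ul is nonzero
      have hul1 : (1:ℝ) ≤ ∑ j, ul j := by
        have hsums : ∀ n, (1:ℝ) ≤ ∑ j, u (φ n) j := by
          intro n
          obtain ⟨i, hi⟩ := hu1 (φ n)
          calc (1:ℝ) = u (φ n) i := hi.symm
            _ ≤ ∑ j, u (φ n) j :=
              Finset.single_le_sum (fun j _ => (hu (φ n) j).1) (Finset.mem_univ i)
        have hlimsum : Filter.Tendsto (fun n => ∑ j, u (φ n) j) Filter.atTop
            (nhds (∑ j, ul j)) := tendsto_finset_sum _ fun j _ => hlimui j
        exact ge_of_tendsto' hlimsum hsums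
      have hulnn : ∀ i, 0 ≤ ul i := by
        intro i
        exact (hmem.2 i (Set.mem_univ i)).1
      obtain ⟨i0, hi0⟩ : ∃ i0, 0 < ul i0 := by
        by_contra hc
        push_neg at hc
        have : ∑ j, ul j ≤ 0 := Finset.sum_nonpos fun j _ => hc j
        linarith
      have hBlnn : ∀ i j, 0 ≤ Bl i j := fun i j => hnn i _ (hmem.1 i) j
      have := specRad_ge Bl hBlnn ul hulnn i0 hi0 α hα hfin
      have := H Bl hmem.1
      linarith
    -- construct v
    obtain ⟨K, hK⟩ := hKey
    have hK0 : K ≠ 0 := by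
      intro h
      subst h
      obtain ⟨i⟩ := hnem
      have := hK i
      rw [hw0] at this
      simp at this
    set v : Fin N → ℝ := fun i => ∑ k ∈ Finset.range K, α ^ (K - 1 - k) * w k i with hvdef
    have hvpos : ∀ i, 0 < v i := by
      intro i
      have h1 : α ^ (K - 1 - 0) * w 0 i ≤ v i := by
        apply Finset.single_le_sum (f := fun k => α ^ (K - 1 - k) * w k i)
        · intro k _
          exact mul_nonneg (pow_nonneg hα.le _) (hwnn k i)
        · exact Finset.mem_range.2 (Nat.pos_of_ne_zero hK0)
      have h2 : (0:ℝ) < α ^ (K - 1 - 0) * w 0 i := by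
        rw [hw0]
        simp only [Pi.one_apply, mul_one]
        exact pow_pos hα _
      linarith
    refine ⟨v, hvpos, ?_⟩
    intro A hA i
    have h1 : A.mulVec v i ≤ Tmax rows v i := mulVec_le_Tmax hcomp hA v i
    have h2 : Tmax rows v i ≤ ∑ k ∈ Finset.range K, α ^ (K - 1 - k) * w (k + 1) i := by
      have h3 : v = ∑ k ∈ Finset.range K, α ^ (K - 1 - k) • w k := by
        funext j
        rw [hvdef]
        simp [Finset.sum_apply]
      have h4 := Tmax_combo_le hne hcomp K (fun k => α ^ (K - 1 - k))
        (fun k => pow_nonneg hα.le _) w i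
      rw [← h3] at h4
      calc Tmax rows v i ≤ ∑ k ∈ Finset.range K, α ^ (K - 1 - k) * Tmax rows (w k) i := h4
        _ = ∑ k ∈ Finset.range K, α ^ (K - 1 - k) * w (k + 1) i := by
            apply Finset.sum_congr rfl
            intro k _
            rw [hws k]
    -- telescoping identity
    have h5 : ∑ k ∈ Finset.range K, α ^ (K - 1 - k) * w (k + 1) i + α ^ K * 1
        = α * v i + w K i := by
      have hL : ∑ k ∈ Finset.range (K + 1), α ^ (K - k) * w k i
          = ∑ k ∈ Finset.range K, α ^ (K - (k + 1)) * w (k + 1) i + α ^ (K - 0) * w 0 i :=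
        Finset.sum_range_succ' (fun k => α ^ (K - k) * w k i) K
      have hR : ∑ k ∈ Finset.range (K + 1), α ^ (K - k) * w k i
          = ∑ k ∈ Finset.range K, α ^ (K - k) * w k i + α ^ (K - K) * w K i :=
        Finset.sum_range_succ (fun k => α ^ (K - k) * w k i) K
      have e1 : ∀ k, K - (k + 1) = K - 1 - k := by intro k; omega
      have e2 : α * v i = ∑ k ∈ Finset.range K, α ^ (K - k) * w k i := by
        rw [hvdef, Finset.mul_sum]
        apply Finset.sum_congr rfl
        intro k hk
        have hkK : k < K := Finset.mem_range.1 hk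
        have e3 : K - 1 - k + 1 = K - k := by omega
        rw [← mul_assoc, ← pow_succ', e3]
      rw [hw0] at hL
      simp only [Pi.one_apply, Nat.sub_zero, Nat.sub_self, pow_zero, one_mul, mul_one] at hL hR
      rw [e2]
      have e4 : ∑ k ∈ Finset.range K, α ^ (K - (k + 1)) * w (k + 1) i
          = ∑ k ∈ Finset.range K, α ^ (K - 1 - k) * w (k + 1) i := by
        apply Finset.sum_congr rfl
        intro k _
        rw [e1]
      rw [e4] at hL
      rw [mul_one]
      linarith [hL, hR]
    have h6 : w K i < α ^ K := hK i
    calc A.mulVec v i ≤ ∑ k ∈ Finset.range K, α ^ (K - 1 - k) * w (k + 1) i :=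
          le_trans h1 h2
      _ = α * v i + w K i - α ^ K * 1 := by linarith [h5]
      _ < α * v i := by rw [mul_one]; linarith
  · -- backward direction
    rintro ⟨v, hv, hAv⟩ A hA
    have hAnn : ∀ i j, 0 ≤ A i j := fun i j => hnn i _ (hA i) j
    rcases Nat.eq_zero_or_pos N with hN | hN
    · subst hN
      have hsub : Subsingleton (Matrix (Fin 0) (Fin 0) ℂ) :=
        ⟨fun X Y => by ext i j; exact i.elim0⟩
      have hspec : spectrum ℂ (A.map (Complex.ofReal)) = ∅ := by
        ext μ
        simp only [Set.mem_empty_iff_false, iff_false]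
        intro hmem
        exact spectrum.notMem_iff.2 (@isUnit_of_subsingleton _ _ hsub _) hmem
      rw [specRad, hspec]
      simp [Real.sSup_empty]
      exact hα
    haveI hnem : Nonempty (Fin N) := Fin.pos_iff_nonempty.1 hN
    have hNe : (Finset.univ : Finset (Fin N)).Nonempty := Finset.univ_nonempty
    set β := Finset.univ.sup' hNe (fun i => A.mulVec v i / v i) with hβdef
    have hβlt : β < α := by
      rw [hβdef, Finset.sup'_lt_iff]
      intro i _
      rw [div_lt_iff₀ (hv i)]
      exact hAv A hA i
    have hβub : ∀ i, A.mulVec v i ≤ β * v i := by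
      intro i
      have h1 : A.mulVec v i / v i ≤ β :=
        Finset.le_sup' (fun i => A.mulVec v i / v i) (Finset.mem_univ i)
      rw [div_le_iff₀ (hv i)] at h1
      linarith
    have hβ0 : 0 ≤ β := by
      obtain ⟨i⟩ := hnem
      have h1 : 0 ≤ A.mulVec v i := by
        simp only [Matrix.mulVec, dotProduct]
        exact Finset.sum_nonneg fun j _ => mul_nonneg (hAnn i j) (hv j).le
      have h2 : A.mulVec v i / v i ≤ β :=
        Finset.le_sup' (fun i => A.mulVec v i / v i) (Finset.mem_univ i)
      have h3 : 0 ≤ A.mulVec v i / v i := div_nonneg h1 (hv i).le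
      linarith
    exact lt_of_le_of_lt (specRad_le A hAnn v hv β hβ0 hβub) hβlt
end

section
/- If A and B are nonnegative square matrices of the same size with A ≤ B entrywise, then the spectral radius of A is at most the spectral radius of B. -/
open Matrix
open scoped ENNReal NNReal

section Stmt19Aux

attribute [local instance] Matrix.linftyOpNormedAddCommGroup Matrix.linftyOpNormedRing
  Matrix.linftyOpNormedAlgebra

variable {N : ℕ}

noncomputable local instance : CompleteSpace (Matrix (Fin N) (Fin N) ℂ) :=
  FiniteDimensional.complete ℂ (Matrix (Fin N) (Fin N) ℂ)

/-- Entrywise comparison of powers of nonnegative matrices. -/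
lemma stmt19_pow_entry (A B : Matrix (Fin N) (Fin N) ℝ)
    (hA : ∀ i j, 0 ≤ A i j) (hAB : ∀ i j, A i j ≤ B i j) (n : ℕ) :
    ∀ i j, 0 ≤ (A ^ n) i j ∧ (A ^ n) i j ≤ (B ^ n) i j := by
  induction n with
  | zero =>
    intro i j
    by_cases h : i = j <;> simp [pow_zero, Matrix.one_apply, h]
  | succ n ih =>
    intro i j
    rw [pow_succ, pow_succ, Matrix.mul_apply, Matrix.mul_apply]
    constructor
    · exact Finset.sum_nonneg fun k _ => mul_nonneg (ih i k).1 (hA k j)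
    · refine Finset.sum_le_sum fun k _ => ?_
      exact mul_le_mul (ih i k).2 (hAB k j) (hA k j) (le_trans (ih i k).1 (ih i k).2)

/-- Norm comparison for complexifications of entrywise-dominated nonnegative matrices. -/
lemma stmt19_norm_le (A B : Matrix (Fin N) (Fin N) ℝ)
    (hA : ∀ i j, 0 ≤ A i j) (hAB : ∀ i j, A i j ≤ B i j) :
    ‖A.map Complex.ofReal‖ ≤ ‖B.map Complex.ofReal‖ := by
  rw [Matrix.linfty_opNorm_def, Matrix.linfty_opNorm_def]
  norm_cast
  refine Finset.sup_mono_fun fun i _ => Finset.sum_le_sum fun j _ => ?_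
  have : ∀ x : ℝ, ‖((x : ℂ))‖₊ = ‖x‖₊ := fun x => by
    ext; simp
  simp only [Matrix.map_apply, this]
  rw [← NNReal.coe_le_coe]
  simp only [coe_nnnorm, Real.norm_eq_abs]
  rw [abs_of_nonneg (hA i j), abs_of_nonneg (le_trans (hA i j) (hAB i j))]
  exact hAB i j

lemma stmt19_main (hN : 0 < N) (A B : Matrix (Fin N) (Fin N) ℝ)
    (hA : ∀ i j, 0 ≤ A i j) (hAB : ∀ i j, A i j ≤ B i j) :
    specRad A ≤ specRad B := by
  haveI : Nonempty (Fin N) := Fin.pos_iff_nonempty.mp hN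
  set A' := A.map Complex.ofReal with hA'
  set B' := B.map Complex.ofReal with hB'
  -- comparison of Mathlib spectral radii via Gelfand's formula
  have key : spectralRadius ℂ A' ≤ spectralRadius ℂ B' := by
    refine le_of_tendsto_of_tendsto'
      (spectrum.pow_nnnorm_pow_one_div_tendsto_nhds_spectralRadius A')
      (spectrum.pow_nnnorm_pow_one_div_tendsto_nhds_spectralRadius B')
      fun n => ?_
    refine ENNReal.rpow_le_rpow ?_ (by positivity)
    rw [ENNReal.coe_le_coe]
    have h1 : A' ^ n = (A ^ n).map Complex.ofReal := by
      rw [hA']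
      exact_mod_cast (map_pow (Complex.ofRealHom.mapMatrix) A n).symm
    have h2 : B' ^ n = (B ^ n).map Complex.ofReal := by
      rw [hB']
      exact_mod_cast (map_pow (Complex.ofRealHom.mapMatrix) B n).symm
    rw [← NNReal.coe_le_coe]
    simp only [coe_nnnorm, h1, h2]
    exact stmt19_norm_le _ _ (fun i j => (stmt19_pow_entry A B hA hAB n i j).1)
      (fun i j => (stmt19_pow_entry A B hA hAB n i j).2)
  -- upper bound for the sup over the spectrum of B
  have hbddB : BddAbove ((fun z : ℂ => ‖z‖) '' spectrum ℂ B') := by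
    refine ⟨‖B'‖, ?_⟩
    rintro x ⟨z, hz, rfl⟩
    show ‖z‖ ≤ ‖B'‖
    exact spectrum.norm_le_norm_of_mem hz
  have hneB : (spectrum ℂ B').Nonempty := spectrum.nonempty B'
  obtain ⟨z₀, hz₀⟩ := hneB
  have h0B : 0 ≤ specRad B := by
    refine le_trans (norm_nonneg z₀) ?_
    exact le_csSup hbddB ⟨z₀, hz₀, rfl⟩
  -- spectralRadius B' ≤ ofReal (specRad B)
  have hub : spectralRadius ℂ B' ≤ ENNReal.ofReal (specRad B) := by
    rw [spectralRadius]
    refine iSup₂_le fun k hk => ?_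
    rw [← enorm_eq_nnnorm, ← ofReal_norm]
    refine ENNReal.ofReal_le_ofReal ?_
    have : ‖k‖ = (fun z : ℂ => ‖z‖) k := rfl
    rw [this]
    exact le_csSup hbddB ⟨k, hk, rfl⟩
  -- conclude
  refine Real.sSup_le ?_ h0B
  rintro x ⟨μ, hμ, rfl⟩
  have hlow : ENNReal.ofReal ‖μ‖ ≤ spectralRadius ℂ A' := by
    have : (‖μ‖₊ : ℝ≥0∞) ≤ spectralRadius ℂ A' := le_iSup₂ (f := fun k _ => (‖k‖₊ : ℝ≥0∞)) μ hμ
    rwa [← enorm_eq_nnnorm, ← ofReal_norm] at this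
  have := le_trans hlow (le_trans key hub)
  rwa [ENNReal.ofReal_le_ofReal_iff h0B] at this

end Stmt19Aux

theorem stmt19 {N : ℕ} (A B : Matrix (Fin N) (Fin N) ℝ)
    (hA : ∀ i j, 0 ≤ A i j) (hAB : ∀ i j, A i j ≤ B i j) :
    specRad A ≤ specRad B := by
  rcases Nat.eq_zero_or_pos N with hN | hN
  · subst hN
    have hempty : ∀ (M : Matrix (Fin 0) (Fin 0) ℝ),
        spectrum ℂ (M.map Complex.ofReal) = ∅ := by
      intro M
      ext z
      simp [spectrum.mem_iff, isUnit_of_subsingleton]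
    simp [specRad, hempty, Real.sSup_empty]
  · exact stmt19_main hN A B hA hAB
end
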